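/- Let $n \ge 1$ and let $\alpha \ge n$ be positive integers. Then $\sum q^{c_1 + c_2 + \cdots + c_n + \mathrm{inv}(c)} = q^{\binom{n}{2}} \prod_{i=0}^{n-1} [\alpha - i]_q$, where the sum is over all tuples $(c_1,\dots,c_n)$ of pairwise distinct integers in $\{0,1,\dots,\alpha-1\}$, and $\mathrm{inv}(c) = |\{(i,j) : i < j, \ c_i > c_j\}|$. -/

import Mathlib

open scoped Classical

open Finset

private lemma card_val_lt (m k : ℕ) (hk : k ≤ m) :
    (Finset.univ.filter fun i : Fin m => (i : ℕ) < k).card = k := by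
  have h : ∀ a ∈ Finset.range k, a < m := fun a ha => lt_of_lt_of_le (mem_range.mp ha) hk
  have he : (Finset.univ.filter fun i : Fin m => (i : ℕ) < k) = (Finset.range k).attachFin h := by
    ext i; simp [Finset.mem_attachFin]
  rw [he, Finset.card_attachFin, Finset.card_range]

private lemma card_fin_lt {m : ℕ} (j : Fin m) :
    (Finset.univ.filter (· < j)).card = (j : ℕ) := by
  have : (Finset.univ.filter (· < j)) = Finset.univ.filter fun i : Fin m => (i : ℕ) < (j : ℕ) := by
    apply Finset.filter_congr; intro x _; exact Fin.lt_def
  rw [this, card_val_lt m j j.isLt.le]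

private lemma rank_key {m : ℕ} (U : Finset (Fin m)) (k : ℕ) (hk : k < U.card) :
    (U.filter (· < U.orderEmbOfFin rfl ⟨k, hk⟩)).card = k := by
  have hrange : ∀ x : Fin m, x ∈ U ↔ ∃ i, U.orderEmbOfFin rfl i = x := by
    intro x
    rw [← Finset.mem_coe, ← Finset.range_orderEmbOfFin U rfl]
    exact Set.mem_range
  have himg : U.filter (· < U.orderEmbOfFin rfl ⟨k, hk⟩)
      = (Finset.univ.filter fun i : Fin U.card => (i : ℕ) < k).image (U.orderEmbOfFin rfl) := by
    ext x
    simp only [mem_filter, mem_image, mem_univ, true_and]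
    constructor
    · rintro ⟨hxU, hlt⟩
      obtain ⟨i, rfl⟩ := (hrange x).mp hxU
      exact ⟨i, by simpa [Fin.lt_def] using (U.orderEmbOfFin rfl).lt_iff_lt.mp hlt, rfl⟩
    · rintro ⟨i, hik, rfl⟩
      exact ⟨(hrange _).mpr ⟨i, rfl⟩,
        (U.orderEmbOfFin rfl).lt_iff_lt.mpr (by simpa [Fin.lt_def] using hik)⟩
  rw [himg, Finset.card_image_of_injective _ (U.orderEmbOfFin rfl).injective,
    card_val_lt _ _ hk.le]

private lemma rank_sum {m : ℕ} (U : Finset (Fin m)) (f : ℕ → Polynomial ℚ) :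
    ∑ j ∈ U, f ((U.filter (· < j)).card) = ∑ k ∈ Finset.range U.card, f k := by
  refine Finset.sum_bij' (fun j _ => (U.filter (· < j)).card)
    (fun k hk => U.orderEmbOfFin rfl ⟨k, Finset.mem_range.mp hk⟩) ?_ ?_ ?_ ?_ ?_
  · intro a ha
    rw [Finset.mem_range]
    exact Finset.card_lt_card ⟨Finset.filter_subset _ _,
      fun hsub => absurd (hsub ha) (by simp)⟩
  · intro k hk
    exact Finset.orderEmbOfFin_mem U rfl _
  · intro a ha
    have hrange : ∃ i, U.orderEmbOfFin rfl i = a := by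
      rw [← Set.mem_range, Finset.range_orderEmbOfFin U rfl]; exact ha
    obtain ⟨i, rfl⟩ := hrange
    congr 1
    · exact Fin.ext (by simpa using rank_key U i.val i.isLt)
  · intro k hk
    exact rank_key U k (Finset.mem_range.mp hk)
  · intro a _; rfl

private lemma exponent_eq {α m : ℕ} (c : Fin m → Fin α) (hc : Function.Injective c)
    (j : Fin α) (hj : j ∉ Finset.univ.image c) :
    (j : ℕ) + (Finset.univ.filter fun i => j < c i).card
      = m + (((Finset.univ \ Finset.univ.image c)).filter (· < j)).card := by
  set V := Finset.univ.image c with hV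
  have hVcard : V.card = m := by
    rw [hV, Finset.card_image_of_injective _ hc, Finset.card_univ, Fintype.card_fin]
  have habove : (Finset.univ.filter fun i => j < c i).card
      = (V.filter fun v => j < v).card := by
    have : V.filter (fun v => j < v) = (Finset.univ.filter fun i => j < c i).image c := by
      ext x
      simp only [hV, Finset.mem_filter, Finset.mem_image, Finset.mem_univ, true_and]
      constructor
      · rintro ⟨⟨i, rfl⟩, hlt⟩; exact ⟨i, hlt, rfl⟩
      · rintro ⟨i, hlt, rfl⟩; exact ⟨⟨i, rfl⟩, hlt⟩
    rw [this, Finset.card_image_of_injective _ hc]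
  have hsplit : ((Finset.univ : Finset (Fin α)).filter (· < j)).card
      = (V.filter (· < j)).card + ((Finset.univ \ V).filter (· < j)).card := by
    rw [← Finset.card_union_of_disjoint, ← Finset.filter_union,
      Finset.union_sdiff_of_subset (Finset.subset_univ V)]
    exact Finset.disjoint_filter_filter Finset.sdiff_disjoint.symm
  have htri : (V.filter (· < j)).card + (V.filter fun v => j < v).card = m := by
    rw [← Finset.card_union_of_disjoint, ← Finset.filter_or]
    · rw [← hVcard]
      congr 1
      apply Finset.filter_true_of_mem
      intro x hx
      exact lt_or_gt_of_ne (fun h => hj (h ▸ hx))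
    · exact Finset.disjoint_filter_filter' _ _ (by
        simp only [disjoint_iff_inf_le]
        intro x hx
        exact absurd (lt_trans hx.1 hx.2) (lt_irrefl x))
  have hj' : (j : ℕ) = ((Finset.univ : Finset (Fin α)).filter (· < j)).card :=
    (card_fin_lt j).symm
  omega

private lemma step_sum {α m : ℕ} (c : Fin m → Fin α) (hc : Function.Injective c) :
    ∑ j ∈ (Finset.univ \ Finset.univ.image c),
        (Polynomial.X : Polynomial ℚ) ^ ((j : ℕ) + (Finset.univ.filter fun i => j < c i).card)
      = Polynomial.X ^ m * ∑ k ∈ Finset.range (α - m), (Polynomial.X : Polynomial ℚ) ^ k := by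
  have hcard : (Finset.univ \ Finset.univ.image c).card = α - m := by
    rw [Finset.card_sdiff_of_subset (Finset.subset_univ _), Finset.card_univ, Fintype.card_fin,
      Finset.card_image_of_injective _ hc, Finset.card_univ, Fintype.card_fin]
  calc ∑ j ∈ (Finset.univ \ Finset.univ.image c),
        (Polynomial.X : Polynomial ℚ) ^ ((j : ℕ) + (Finset.univ.filter fun i => j < c i).card)
      = ∑ j ∈ (Finset.univ \ Finset.univ.image c),
        (Polynomial.X : Polynomial ℚ)
          ^ (m + (((Finset.univ \ Finset.univ.image c)).filter (· < j)).card) :=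
        Finset.sum_congr rfl fun j hj => by
          rw [exponent_eq c hc j (Finset.mem_sdiff.mp hj).2]
    _ = ∑ k ∈ Finset.range (α - m), (Polynomial.X : Polynomial ℚ) ^ (m + k) := by
        rw [← hcard]
        exact rank_sum _ (fun k => Polynomial.X ^ (m + k))
    _ = Polynomial.X ^ m * ∑ k ∈ Finset.range (α - m), (Polynomial.X : Polynomial ℚ) ^ k := by
        rw [Finset.mul_sum]
        exact Finset.sum_congr rfl fun k _ => pow_add _ _ _

private lemma snoc_inj_iff {α n : ℕ} (c : Fin n → Fin α) (j : Fin α) :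
    Function.Injective (Fin.snoc c j : Fin (n + 1) → Fin α) ↔
      Function.Injective c ∧ j ∉ Finset.univ.image c := by
  constructor
  · intro h
    refine ⟨fun a b hab => ?_, fun hmem => ?_⟩
    · have : (Fin.snoc c j : Fin (n + 1) → Fin α) a.castSucc
          = (Fin.snoc c j : Fin (n + 1) → Fin α) b.castSucc := by
        simpa [Fin.snoc_castSucc] using hab
      simpa using Fin.castSucc_injective n (h this)
    · obtain ⟨i, -, hi⟩ := Finset.mem_image.mp hmem
      have : (Fin.snoc c j : Fin (n + 1) → Fin α) i.castSucc
          = (Fin.snoc c j : Fin (n + 1) → Fin α) (Fin.last n) := by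
        simp [Fin.snoc_castSucc, Fin.snoc_last, hi]
      exact absurd (h this) (by simp [Fin.ext_iff]; omega)
  · rintro ⟨hc, hj⟩ a b hab
    rcases Fin.eq_castSucc_or_eq_last a with ⟨a', rfl⟩ | rfl <;>
      rcases Fin.eq_castSucc_or_eq_last b with ⟨b', rfl⟩ | rfl
    · simp only [Fin.snoc_castSucc] at hab
      rw [hc hab]
    · simp only [Fin.snoc_castSucc, Fin.snoc_last] at hab
      exact absurd (Finset.mem_image.mpr ⟨a', Finset.mem_univ _, hab⟩) hj
    · simp only [Fin.snoc_castSucc, Fin.snoc_last] at hab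
      exact absurd (Finset.mem_image.mpr ⟨b', Finset.mem_univ _, hab.symm⟩) hj
    · rfl

private lemma inv_snoc {α n : ℕ} (c : Fin n → Fin α) (j : Fin α) :
    (Finset.univ.filter fun p : Fin (n + 1) × Fin (n + 1) =>
        p.1 < p.2 ∧ (Fin.snoc c j : Fin (n + 1) → Fin α) p.2
          < (Fin.snoc c j : Fin (n + 1) → Fin α) p.1).card
      = (Finset.univ.filter fun p : Fin n × Fin n => p.1 < p.2 ∧ c p.2 < c p.1).card
        + (Finset.univ.filter fun i => j < c i).card := by
  simp only [Finset.card_filter]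
  rw [Fintype.sum_prod_type, Fintype.sum_prod_type]
  rw [Fin.sum_univ_castSucc (f := fun a => ∑ b : Fin (n + 1),
    if a < b ∧ (Fin.snoc c j : Fin (n + 1) → Fin α) b < (Fin.snoc c j : Fin (n + 1) → Fin α) a
      then 1 else 0)]
  simp only [Fin.sum_univ_castSucc, Fin.snoc_castSucc, Fin.snoc_last,
    Fin.castSucc_lt_castSucc_iff, Fin.castSucc_lt_last, true_and]
  have hlast : ∀ b : Fin n, ¬ (Fin.last n < b.castSucc) := fun b =>
    not_lt.mpr (Fin.le_last _)
  simp only [hlast, false_and, if_false, lt_irrefl, Finset.sum_const_zero, add_zero]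
  rw [Finset.sum_add_distrib]

private lemma sum_snoc {α n : ℕ} (c : Fin n → Fin α) (j : Fin α) :
    ∑ i : Fin (n + 1), ((Fin.snoc c j : Fin (n + 1) → Fin α) i : ℕ)
      = (∑ i : Fin n, (c i : ℕ)) + (j : ℕ) := by
  rw [Fin.sum_univ_castSucc]
  simp

private lemma main_aux (α : ℕ) : ∀ n : ℕ, n ≤ α →
    ∑ c ∈ (Finset.univ : Finset (Fin n → Fin α)).filter (fun c => Function.Injective c),
      (Polynomial.X : Polynomial ℚ) ^
        ((∑ i : Fin n, (c i : ℕ)) +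
          (Finset.univ.filter (fun p : Fin n × Fin n => p.1 < p.2 ∧ c p.2 < c p.1)).card)
    = Polynomial.X ^ n.choose 2 *
        ∏ i ∈ Finset.range n,
          (∑ j ∈ Finset.range (α - i), (Polynomial.X : Polynomial ℚ) ^ j) := by
  intro n
  induction n with
  | zero =>
    intro _
    have h0 : ((Finset.univ : Finset (Fin 0 → Fin α)).filter fun c => Function.Injective c)
        = Finset.univ :=
      Finset.filter_true_of_mem (fun c _ => fun a b _ => Subsingleton.elim a b)
    rw [h0]
    simp
  | succ n ih =>
    intro hn1
    have hn : n ≤ α := Nat.le_of_succ_le hn1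
    rw [Finset.sum_filter,
      ← Equiv.sum_comp (Fin.snocEquiv (fun _ => Fin α)), Fintype.sum_prod_type,
      Finset.sum_comm]
    have hsnoc : ∀ (p : Fin α × (Fin n → Fin α)),
        (Fin.snocEquiv (fun _ => Fin α)) p = Fin.snoc p.2 p.1 := fun p => rfl
    have key : ∀ c' : Fin n → Fin α,
        (∑ j : Fin α,
          if Function.Injective ((Fin.snocEquiv (fun _ => Fin α)) (j, c')) then
            (Polynomial.X : Polynomial ℚ) ^
              ((∑ i : Fin (n + 1), (((Fin.snocEquiv (fun _ => Fin α)) (j, c')) i : ℕ)) +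
                (Finset.univ.filter (fun p : Fin (n + 1) × Fin (n + 1) =>
                  p.1 < p.2 ∧ ((Fin.snocEquiv (fun _ => Fin α)) (j, c')) p.2
                    < ((Fin.snocEquiv (fun _ => Fin α)) (j, c')) p.1)).card)
          else 0)
        = (if Function.Injective c' then
            (Polynomial.X : Polynomial ℚ) ^
              ((∑ i : Fin n, (c' i : ℕ)) +
                (Finset.univ.filter (fun p : Fin n × Fin n =>
                  p.1 < p.2 ∧ c' p.2 < c' p.1)).card)
          else 0) *
          (Polynomial.X ^ n * ∑ k ∈ Finset.range (α - n), (Polynomial.X : Polynomial ℚ) ^ k) := by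
      intro c'
      simp only [hsnoc]
      by_cases hc' : Function.Injective c'
      · rw [if_pos hc', ← Finset.sum_filter]
        have hfil : (Finset.univ.filter fun j : Fin α =>
            Function.Injective (Fin.snoc c' j : Fin (n + 1) → Fin α))
            = Finset.univ \ Finset.univ.image c' := by
          ext j
          simp [snoc_inj_iff, hc', Finset.mem_sdiff]
        rw [hfil]
        have hterm : ∀ j ∈ Finset.univ \ Finset.univ.image c',
            (Polynomial.X : Polynomial ℚ) ^
              ((∑ i : Fin (n + 1), ((Fin.snoc c' j : Fin (n + 1) → Fin α) i : ℕ)) +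
                (Finset.univ.filter (fun p : Fin (n + 1) × Fin (n + 1) =>
                  p.1 < p.2 ∧ (Fin.snoc c' j : Fin (n + 1) → Fin α) p.2
                    < (Fin.snoc c' j : Fin (n + 1) → Fin α) p.1)).card)
            = (Polynomial.X : Polynomial ℚ) ^
                ((∑ i : Fin n, (c' i : ℕ)) +
                  (Finset.univ.filter (fun p : Fin n × Fin n =>
                    p.1 < p.2 ∧ c' p.2 < c' p.1)).card) *
              (Polynomial.X : Polynomial ℚ) ^
                ((j : ℕ) + (Finset.univ.filter fun i => j < c' i).card) := by
          intro j _
          rw [sum_snoc, inv_snoc, ← pow_add]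
          ring_nf
        rw [Finset.sum_congr rfl hterm, ← Finset.mul_sum, step_sum c' hc']
      · rw [if_neg hc', zero_mul]
        apply Finset.sum_eq_zero
        intro j _
        rw [if_neg]
        intro h
        exact hc' ((snoc_inj_iff c' j).mp h).1
    rw [Finset.sum_congr rfl (fun c' _ => key c'), ← Finset.sum_mul, ← Finset.sum_filter,
      ih hn, Finset.prod_range_succ]
    have hch : (n + 1).choose 2 = n.choose 2 + n := by
      simp [Nat.choose_succ_succ, Nat.choose_one_right]; omega
    rw [hch, pow_add]
    ring

/-- Principal specialization formula for the chromatic quasisymmetric function of the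
complete graph: injective colorings weighted by inversions and total color weight. -/
theorem complete_graph_principal_specialization (n α : ℕ) (hn : 1 ≤ n) (hα : n ≤ α) :
    ∑ c ∈ (Finset.univ : Finset (Fin n → Fin α)).filter (fun c => Function.Injective c),
      (Polynomial.X : Polynomial ℚ) ^
        ((∑ i : Fin n, (c i : ℕ)) +
          (Finset.univ.filter (fun p : Fin n × Fin n => p.1 < p.2 ∧ c p.2 < c p.1)).card)
    = Polynomial.X ^ n.choose 2 *
        ∏ i ∈ Finset.range n,
          (∑ j ∈ Finset.range (α - i), (Polynomial.X : Polynomial ℚ) ^ j) :=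
  main_aux α n hα
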